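/- Let P_1, …, P_m be n×n real symmetric idempotent matrices and p_1, …, p_m nonnegative reals with Σ_{i=1}^m p_i = 1. Set 𝐙_i := I ⊗ I − (I − P_i) ⊗ (I − P_i). Then λ_min( Σ_{i=1}^m p_i P_i ) ≤ λ_min( Σ_{i=1}^m p_i 𝐙_i ) ≤ 2 λ_min( Σ_{i=1}^m p_i P_i ). (Hence the parameter μ = λ_min(E[𝐙]) of the symmetry-preserving method satisfies λ_min(E[P]) ≤ μ ≤ 2λ_min(E[P]), i.e. enforcing symmetry can up to double μ.) -/

import Mathlib

open Matrix Kronecker Finset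

section Helpers
set_option linter.unusedSectionVars false

variable {ι κ : Type*} [Fintype ι] [Fintype κ] [DecidableEq ι] [DecidableEq κ]

lemma kron_sub_left (A B : Matrix ι ι ℝ) (C : Matrix κ κ ℝ) :
    (A - B) ⊗ₖ C = A ⊗ₖ C - B ⊗ₖ C := by
  ext ⟨i, k⟩ ⟨j, l⟩
  simp [sub_mul]

lemma kron_sub_right (A : Matrix ι ι ℝ) (B C : Matrix κ κ ℝ) :
    A ⊗ₖ (B - C) = A ⊗ₖ B - A ⊗ₖ C := by
  ext ⟨i, k⟩ ⟨j, l⟩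
  simp [mul_sub]

lemma sum_kron {σ : Type*} (s : Finset σ) (f : σ → Matrix ι ι ℝ) (B : Matrix κ κ ℝ) :
    (∑ i ∈ s, f i) ⊗ₖ B = ∑ i ∈ s, (f i) ⊗ₖ B := by
  ext ⟨i, k⟩ ⟨j, l⟩
  simp [Finset.sum_mul, Matrix.sum_apply]

lemma kron_conjT (A : Matrix ι ι ℝ) (B : Matrix κ κ ℝ) :
    (A ⊗ₖ B)ᴴ = Aᴴ ⊗ₖ Bᴴ := by
  ext ⟨i, k⟩ ⟨j, l⟩
  simp [conjTranspose_apply]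

lemma psd_kron {A : Matrix ι ι ℝ} {B : Matrix κ κ ℝ}
    (hA : A.PosSemidef) (hB : B.PosSemidef) : (A ⊗ₖ B).PosSemidef := by
  exact hA.kronecker hB

lemma sum_mulVec' {σ : Type*} (s : Finset σ) (f : σ → Matrix ι ι ℝ) (v : ι → ℝ) :
    (∑ i ∈ s, f i) *ᵥ v = ∑ i ∈ s, (f i) *ᵥ v := by
  ext j
  simp only [mulVec, dotProduct, Matrix.sum_apply, Finset.sum_apply, Finset.sum_mul]
  rw [Finset.sum_comm]

lemma dot_sum' {σ : Type*} (s : Finset σ) (x : ι → ℝ) (f : σ → ι → ℝ) :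
    x ⬝ᵥ (∑ i ∈ s, f i) = ∑ i ∈ s, x ⬝ᵥ f i := by
  simp only [dotProduct, Finset.sum_apply, Finset.mul_sum]
  rw [Finset.sum_comm]

def vk (u : ι → ℝ) (v : κ → ℝ) : ι × κ → ℝ := fun q => u q.1 * v q.2

lemma kron_mulVec (A : Matrix ι ι ℝ) (B : Matrix κ κ ℝ) (u : ι → ℝ) (v : κ → ℝ) :
    (A ⊗ₖ B) *ᵥ vk u v = vk (A *ᵥ u) (B *ᵥ v) := by
  ext ⟨i, k⟩
  simp only [mulVec, dotProduct, vk, kroneckerMap_apply, Fintype.sum_prod_type]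
  rw [Finset.sum_mul_sum]
  exact Finset.sum_congr rfl fun j _ => Finset.sum_congr rfl fun l _ => by ring

lemma vk_dot (a c : ι → ℝ) (b d : κ → ℝ) :
    vk a b ⬝ᵥ vk c d = (a ⬝ᵥ c) * (b ⬝ᵥ d) := by
  simp only [dotProduct, vk, Fintype.sum_prod_type]
  rw [Finset.sum_mul_sum]
  exact Finset.sum_congr rfl fun j _ => Finset.sum_congr rfl fun l _ => by ring

lemma psd_sub_inf [Nonempty ι] {A : Matrix ι ι ℝ} (hA : A.IsHermitian) :
    (A - (⨅ j, hA.eigenvalues j) • 1).PosSemidef := by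
  have hUU : (hA.eigenvectorUnitary : Matrix ι ι ℝ) *
      (hA.eigenvectorUnitary : Matrix ι ι ℝ)ᴴ = 1 := by
    rw [← star_eq_conjTranspose]
    exact (Matrix.mem_unitaryGroup_iff).mp hA.eigenvectorUnitary.2
  have hof : (RCLike.ofReal ∘ hA.eigenvalues : ι → ℝ) = hA.eigenvalues := funext fun _ => rfl
  have h2 : (hA.eigenvectorUnitary : Matrix ι ι ℝ) * ((⨅ j, hA.eigenvalues j) • 1) *
      (hA.eigenvectorUnitary : Matrix ι ι ℝ)ᴴ = (⨅ j, hA.eigenvalues j) • 1 := by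
    rw [Matrix.mul_smul, Matrix.smul_mul, mul_one, hUU]
  have hd : diagonal (fun j => hA.eigenvalues j - ⨅ j, hA.eigenvalues j)
      = diagonal (RCLike.ofReal ∘ hA.eigenvalues) - (⨅ j, hA.eigenvalues j) • 1 := by
    rw [hof, smul_one_eq_diagonal, diagonal_sub]
  have key : A - (⨅ j, hA.eigenvalues j) • 1 =
      (hA.eigenvectorUnitary : Matrix ι ι ℝ) *
        diagonal (fun j => hA.eigenvalues j - ⨅ j, hA.eigenvalues j) *
        (hA.eigenvectorUnitary : Matrix ι ι ℝ)ᴴ := by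
    rw [hd, Matrix.mul_sub, Matrix.sub_mul, h2, ← star_eq_conjTranspose,
      ← Unitary.conjStarAlgAut_apply (S := ℝ), ← hA.spectral_theorem]
  rw [key]
  exact (Matrix.PosSemidef.diagonal fun j => sub_nonneg.mpr
    (ciInf_le (Finite.bddBelow_range _) j)).mul_mul_conjTranspose_same _

lemma dot_rayleigh_lemma [Nonempty ι] {A : Matrix ι ι ℝ} (hA : A.IsHermitian)
    (x : ι → ℝ) (hx : x ⬝ᵥ x = 1) :
    (⨅ j, hA.eigenvalues j) ≤ x ⬝ᵥ (A *ᵥ x) := by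
  have h := (psd_sub_inf hA).dotProduct_mulVec_nonneg x
  rw [star_trivial, sub_mulVec, dotProduct_sub, smul_mulVec, one_mulVec,
    dotProduct_smul, hx] at h
  simpa using sub_nonneg.mp h

lemma le_inf_eig [Nonempty ι] {A : Matrix ι ι ℝ} (hA : A.IsHermitian) {c : ℝ}
    (h : (A - c • 1).PosSemidef) : c ≤ ⨅ j, hA.eigenvalues j := by
  refine le_ciInf fun j => ?_
  have hv := hA.mulVec_eigenvectorBasis j
  set v : ι → ℝ := ⇑(hA.eigenvectorBasis j) with hvdef
  have hvv : v ⬝ᵥ v = 1 := by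
    have h1 : ‖hA.eigenvectorBasis j‖ = 1 := hA.eigenvectorBasis.orthonormal.1 j
    have h2 : (inner ℝ (hA.eigenvectorBasis j) (hA.eigenvectorBasis j) : ℝ) = 1 := by
      rw [real_inner_self_eq_norm_sq, h1]; norm_num
    rw [EuclideanSpace.inner_eq_star_dotProduct] at h2
    simpa [star_trivial] using h2
  have h0 := h.dotProduct_mulVec_nonneg v
  rw [star_trivial, sub_mulVec, dotProduct_sub, smul_mulVec, one_mulVec,
    dotProduct_smul, hvv, hv, dotProduct_smul, hvv] at h0
  simpa using sub_nonneg.mp h0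

lemma psd_smul {A : Matrix ι ι ℝ} (hA : A.PosSemidef) {r : ℝ} (hr : 0 ≤ r) :
    (r • A).PosSemidef := by
  refine .of_dotProduct_mulVec_nonneg ?_ fun x => ?_
  · unfold Matrix.IsHermitian
    rw [conjTranspose_smul, hA.1]
    simp
  · rw [smul_mulVec, dotProduct_smul]
    exact smul_nonneg hr (hA.dotProduct_mulVec_nonneg x)

lemma psd_sum {σ : Type*} (s : Finset σ) (f : σ → Matrix ι ι ℝ)
    (h : ∀ i ∈ s, (f i).PosSemidef) : (∑ i ∈ s, f i).PosSemidef := by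
  classical
  induction s using Finset.induction_on with
  | empty => simpa using Matrix.PosSemidef.zero
  | insert _ _ hnotmem ih =>
    rw [Finset.sum_insert hnotmem]
    exact ((h _ (Finset.mem_insert_self _ _))).add
      (ih fun i hi => h i (Finset.mem_insert_of_mem hi))

end Helpers

/-- For symmetric idempotent matrices P₁,…,P_m, a probability vector p,
and 𝐙ᵢ := I⊗I − (I−Pᵢ)⊗(I−Pᵢ), we have
λ_min(Σ pᵢ Pᵢ) ≤ λ_min(Σ pᵢ 𝐙ᵢ) ≤ 2 λ_min(Σ pᵢ Pᵢ). -/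
theorem lambda_min_bigZ_bounds {n m : ℕ} (hn : 0 < n)
    (P : Fin m → Matrix (Fin n) (Fin n) ℝ)
    (hPsym : ∀ i, (P i).IsSymm) (hPidem : ∀ i, P i * P i = P i)
    (p : Fin m → ℝ) (hp : ∀ i, 0 ≤ p i) (hps : ∑ i, p i = 1)
    (Zb : Fin m → Matrix (Fin n × Fin n) (Fin n × Fin n) ℝ)
    (hZb : ∀ i, Zb i = (1 : Matrix (Fin n × Fin n) (Fin n × Fin n) ℝ)
        - (1 - P i) ⊗ₖ (1 - P i)) :
    ∀ (hEP : (∑ i, p i • P i).IsHermitian) (hEZ : (∑ i, p i • Zb i).IsHermitian),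
      (⨅ j, hEP.eigenvalues j) ≤ (⨅ j, hEZ.eigenvalues j) ∧
      (⨅ j, hEZ.eigenvalues j) ≤ 2 * (⨅ j, hEP.eigenvalues j) := by
  have hne : Nonempty (Fin n) := ⟨⟨0, hn⟩⟩
  intro hEP hEZ
  -- basic PSD facts
  have hPherm : ∀ i, (P i).IsHermitian := fun i => by
    rw [Matrix.IsHermitian, conjTranspose_eq_transpose_of_trivial, (hPsym i)]
  have hPpsd : ∀ i, (P i).PosSemidef := fun i => by
    have h : P i = (P i)ᴴ * P i := by rw [hPherm i, hPidem i]
    rw [h]; exact posSemidef_conjTranspose_mul_self _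
  have hQherm : ∀ i, ((1 : Matrix (Fin n) (Fin n) ℝ) - P i).IsHermitian := fun i =>
    Matrix.isHermitian_one.sub (hPherm i)
  have hQidem : ∀ i, ((1 : Matrix (Fin n) (Fin n) ℝ) - P i) *
      ((1 : Matrix (Fin n) (Fin n) ℝ) - P i) = 1 - P i := fun i => by
    rw [Matrix.mul_sub, Matrix.sub_mul, Matrix.sub_mul, mul_one, one_mul, mul_one, hPidem i]
    abel
  have hQpsd : ∀ i, ((1 : Matrix (Fin n) (Fin n) ℝ) - P i).PosSemidef := fun i => by
    have h : (1 : Matrix (Fin n) (Fin n) ℝ) - P i =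
        ((1 : Matrix (Fin n) (Fin n) ℝ) - P i)ᴴ * (1 - P i) := by
      rw [hQherm i, hQidem i]
    rw [h]; exact posSemidef_conjTranspose_mul_self _
  set a := ⨅ j, hEP.eigenvalues j with ha
  set b := ⨅ j, hEZ.eigenvalues j with hb
  -- key identity: Zb i - P i ⊗ 1 = (1 - P i) ⊗ P i
  have key1 : ∀ i, Zb i - (P i) ⊗ₖ (1 : Matrix (Fin n) (Fin n) ℝ)
      = (1 - P i) ⊗ₖ (P i) := by
    intro i
    rw [hZb i]
    calc (1 : Matrix (Fin n × Fin n) (Fin n × Fin n) ℝ) - (1 - P i) ⊗ₖ (1 - P i)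
          - (P i) ⊗ₖ (1 : Matrix (Fin n) (Fin n) ℝ)
        = ((1 : Matrix (Fin n) (Fin n) ℝ) ⊗ₖ (1 : Matrix (Fin n) (Fin n) ℝ)
            - (P i) ⊗ₖ (1 : Matrix (Fin n) (Fin n) ℝ)) - (1 - P i) ⊗ₖ (1 - P i) := by
          rw [one_kronecker_one]; abel
      _ = (1 - P i) ⊗ₖ (1 : Matrix (Fin n) (Fin n) ℝ) - (1 - P i) ⊗ₖ (1 - P i) := by
          rw [← kron_sub_left]
      _ = (1 - P i) ⊗ₖ ((1 : Matrix (Fin n) (Fin n) ℝ) - (1 - P i)) :=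
          (kron_sub_right _ _ _).symm
      _ = (1 - P i) ⊗ₖ (P i) := by rw [sub_sub_cancel]
  -- lower bound
  have key2 : (∑ i, p i • Zb i) - (∑ i, p i • P i) ⊗ₖ (1 : Matrix (Fin n) (Fin n) ℝ)
      = ∑ i, p i • ((1 - P i) ⊗ₖ (P i)) := by
    rw [sum_kron, ← Finset.sum_sub_distrib]
    refine Finset.sum_congr rfl fun i _ => ?_
    rw [smul_kronecker, ← smul_sub, key1 i]
  have hEPa : ((∑ i, p i • P i) - a • 1).PosSemidef := psd_sub_inf hEP
  have h3 : (∑ i, p i • P i) ⊗ₖ (1 : Matrix (Fin n) (Fin n) ℝ)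
      - a • (1 : Matrix (Fin n × Fin n) (Fin n × Fin n) ℝ)
      = ((∑ i, p i • P i) - a • 1) ⊗ₖ (1 : Matrix (Fin n) (Fin n) ℝ) := by
    rw [kron_sub_left, smul_kronecker, one_kronecker_one]
  have hEZa : ((∑ i, p i • Zb i) - a • 1).PosSemidef := by
    have heq : (∑ i, p i • Zb i) - a • 1
        = (∑ i, p i • ((1 - P i) ⊗ₖ (P i)))
          + ((∑ i, p i • P i) - a • 1) ⊗ₖ (1 : Matrix (Fin n) (Fin n) ℝ) := by
      rw [← key2, ← h3]; abel
    rw [heq]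
    exact (psd_sum _ _ fun i _ => psd_smul (psd_kron (hQpsd i) (hPpsd i)) (hp i)).add
      (psd_kron hEPa Matrix.PosSemidef.one)
  have hab : a ≤ b := le_inf_eig hEZ hEZa
  refine ⟨hab, ?_⟩
  -- upper bound
  obtain ⟨j₀, hj₀⟩ := Finite.exists_min hEP.eigenvalues
  have haj : a = hEP.eigenvalues j₀ :=
    le_antisymm (ciInf_le (Finite.bddBelow_range _) j₀) (le_ciInf hj₀)
  set u : Fin n → ℝ := ⇑(hEP.eigenvectorBasis j₀) with hu
  have hu1 : u ⬝ᵥ u = 1 := by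
    have h1 : ‖hEP.eigenvectorBasis j₀‖ = 1 := hEP.eigenvectorBasis.orthonormal.1 j₀
    have h2 : (inner ℝ (hEP.eigenvectorBasis j₀) (hEP.eigenvectorBasis j₀) : ℝ) = 1 := by
      rw [real_inner_self_eq_norm_sq, h1]; norm_num
    rw [EuclideanSpace.inner_eq_star_dotProduct] at h2
    simpa [star_trivial] using h2
  have huA : (∑ i, p i • P i) *ᵥ u = a • u := by
    rw [haj]; exact hEP.mulVec_eigenvectorBasis j₀
  -- a = ∑ pᵢ tᵢ  where tᵢ = u ⬝ (Pᵢ u)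
  have hat : ∑ i, p i * (u ⬝ᵥ (P i *ᵥ u)) = a := by
    have h1 : u ⬝ᵥ ((∑ i, p i • P i) *ᵥ u) = a := by
      rw [huA, dotProduct_smul, hu1]; simp
    rw [← h1, sum_mulVec', dot_sum' _ _]
    exact Finset.sum_congr rfl fun i _ => by rw [smul_mulVec, dotProduct_smul]; rfl
  -- Rayleigh bound with x = u ⊗ u
  have hx1 : vk u u ⬝ᵥ vk u u = 1 := by rw [vk_dot, hu1, mul_one]
  have hbr : b ≤ vk u u ⬝ᵥ ((∑ i, p i • Zb i) *ᵥ vk u u) :=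
    dot_rayleigh_lemma hEZ _ hx1
  have hexp : vk u u ⬝ᵥ ((∑ i, p i • Zb i) *ᵥ vk u u)
      = ∑ i, p i * (1 - (1 - u ⬝ᵥ (P i *ᵥ u))^2) := by
    rw [sum_mulVec', dot_sum' _ _]
    refine Finset.sum_congr rfl fun i _ => ?_
    rw [smul_mulVec, dotProduct_smul, smul_eq_mul]
    congr 1
    rw [hZb i, sub_mulVec, one_mulVec, dotProduct_sub, hx1, kron_mulVec, vk_dot]
    have hQu : ((1 : Matrix (Fin n) (Fin n) ℝ) - P i) *ᵥ u = u - P i *ᵥ u := by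
      rw [sub_mulVec, one_mulVec]
    rw [hQu, dotProduct_sub, hu1]
    ring
  rw [hexp] at hbr
  calc b ≤ ∑ i, p i * (1 - (1 - u ⬝ᵥ (P i *ᵥ u))^2) := hbr
    _ ≤ ∑ i, p i * (2 * (u ⬝ᵥ (P i *ᵥ u))) := by
        refine Finset.sum_le_sum fun i _ => ?_
        have := hp i
        nlinarith [sq_nonneg (u ⬝ᵥ (P i *ᵥ u))]
    _ = 2 * a := by
        rw [← hat, Finset.mul_sum]
        exact Finset.sum_congr rfl fun i _ => by ring
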